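/- Let θ₂, θ₃ > 0 and 0 < ε < θ₂θ₃/12. Then the function r ↦ g(r; θ₂, θ₃) − 4ε·|12θ₃¹¹/r¹² − 6θ₃⁵/r⁶| on (0,∞) is lower regular. -/

import Mathlib

/-- The Lennard-Jones pair potential with parameters θ₂, θ₃. -/
noncomputable def gLJ (θ₂ θ₃ r : ℝ) : ℝ := 4 * θ₂ * ((θ₃ / r) ^ 12 - (θ₃ / r) ^ 6)


/-- A function `f` on `(0,∞)` is lower regular if it is bounded below by `-ψ` for
some positive nonincreasing function `ψ` with `∫₀^∞ r·ψ(r) dr < ∞`. -/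
def LowerRegular (f : ℝ → ℝ) : Prop :=
  ∃ ψ : ℝ → ℝ, (∀ r > (0 : ℝ), 0 < ψ r) ∧ AntitoneOn ψ (Set.Ioi 0) ∧
    MeasureTheory.IntegrableOn (fun r => r * ψ r) (Set.Ioi 0) ∧
    ∀ r > (0 : ℝ), -ψ r ≤ f r

theorem stmt7 (θ₂ θ₃ ε : ℝ) (h2 : 0 < θ₂) (h3 : 0 < θ₃)
    (hε0 : 0 < ε) (hε : ε < θ₂ * θ₃ / 12) :
    LowerRegular (fun r =>
      gLJ θ₂ θ₃ r - 4 * ε * |12 * θ₃ ^ 11 / r ^ 12 - 6 * θ₃ ^ 5 / r ^ 6|) := by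
  set c : ℝ := 4 * θ₃ ^ 11 * (θ₂ * θ₃ - 12 * ε) with hc
  set d : ℝ := 4 * θ₂ * θ₃ ^ 6 + 24 * ε * θ₃ ^ 5 with hd
  have hcpos : 0 < c := by
    apply mul_pos (by positivity); linarith
  have hdpos : 0 < d := by positivity
  set M : ℝ := d ^ 2 / (4 * c) with hM
  have hMpos : 0 < M := div_pos (pow_pos hdpos 2) (by linarith)
  refine ⟨fun r => min M (d / r ^ 6), ?_, ?_, ?_, ?_⟩
  · intro r hr
    exact lt_min hMpos (div_pos hdpos (by positivity))
  · intro a ha b hb hab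
    have ha0 : (0:ℝ) < a := ha
    exact min_le_min le_rfl
      (div_le_div_of_nonneg_left hdpos.le (pow_pos ha0 6) (pow_le_pow_left₀ ha0.le hab 6))
  · have hsplit : Set.Ioi (0:ℝ) = Set.Ioc 0 1 ∪ Set.Ioi 1 :=
      (Set.Ioc_union_Ioi_eq_Ioi zero_le_one).symm
    rw [hsplit, MeasureTheory.integrableOn_union]
    have hmeas : MeasureTheory.AEStronglyMeasurable
        (fun r : ℝ => r * min M (d / r ^ 6)) MeasureTheory.volume := by
      apply Measurable.aestronglyMeasurable
      exact measurable_id.mul (measurable_const.min (measurable_const.div (measurable_id.pow_const 6)))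
    constructor
    · apply MeasureTheory.Measure.integrableOn_of_bounded (M := M)
        (by simp [Real.volume_Ioc]) hmeas
      filter_upwards [MeasureTheory.ae_restrict_mem measurableSet_Ioc] with x hx
      have hx0 : 0 < x := hx.1
      have h1 : (0:ℝ) ≤ min M (d / x ^ 6) := le_min hMpos.le (by positivity)
      rw [Real.norm_eq_abs, abs_of_nonneg (by positivity)]
      calc x * min M (d / x ^ 6) ≤ 1 * M := by
            apply mul_le_mul hx.2 (min_le_left _ _) h1 zero_le_one
        _ = M := one_mul M
    · apply MeasureTheory.Integrable.mono
        ((integrableOn_Ioi_rpow_of_lt (a := -5) (by norm_num) one_pos).const_mul d)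
        (hmeas.restrict)
      filter_upwards [MeasureTheory.ae_restrict_mem measurableSet_Ioi] with x hx
      have hx1 : (1:ℝ) < x := hx
      have hx0 : (0:ℝ) < x := lt_trans one_pos hx1
      have h1 : (0:ℝ) ≤ min M (d / x ^ 6) := le_min hMpos.le (by positivity)
      rw [Real.norm_eq_abs, Real.norm_eq_abs, abs_of_nonneg (by positivity),
        abs_of_nonneg (by positivity)]
      have hrpow : x ^ (-5 : ℝ) = (x ^ (5:ℕ))⁻¹ := by
        rw [Real.rpow_neg hx0.le]
        congr 1
        rw [← Real.rpow_natCast x 5]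
        norm_num
      rw [hrpow]
      calc x * min M (d / x ^ 6) ≤ x * (d / x ^ 6) := by
            gcongr; exact min_le_right _ _
        _ = d * (x ^ (5:ℕ))⁻¹ := by field_simp
  · intro r hr
    have hx0 : (0:ℝ) < r ^ 6 := by positivity
    set x : ℝ := 1 / r ^ 6 with hxdef
    have hxpos : 0 < x := by positivity
    have hg : gLJ θ₂ θ₃ r = 4 * θ₂ * (θ₃ ^ 12 * x ^ 2 - θ₃ ^ 6 * x) := by
      unfold gLJ
      rw [hxdef, div_pow, div_pow]
      field_simp
    have habs : |12 * θ₃ ^ 11 / r ^ 12 - 6 * θ₃ ^ 5 / r ^ 6|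
        ≤ 12 * θ₃ ^ 11 * x ^ 2 + 6 * θ₃ ^ 5 * x := by
      have h12 : 12 * θ₃ ^ 11 / r ^ 12 = 12 * θ₃ ^ 11 * x ^ 2 := by
        rw [hxdef]; field_simp
      have h6 : 6 * θ₃ ^ 5 / r ^ 6 = 6 * θ₃ ^ 5 * x := by
        rw [hxdef]; field_simp
      rw [h12, h6]
      calc |12 * θ₃ ^ 11 * x ^ 2 - 6 * θ₃ ^ 5 * x|
          ≤ |12 * θ₃ ^ 11 * x ^ 2| + |6 * θ₃ ^ 5 * x| := abs_sub _ _
        _ = 12 * θ₃ ^ 11 * x ^ 2 + 6 * θ₃ ^ 5 * x := by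
            rw [abs_of_nonneg (by positivity), abs_of_nonneg (by positivity)]
    have key : c * x ^ 2 - d * x ≤
        gLJ θ₂ θ₃ r - 4 * ε * |12 * θ₃ ^ 11 / r ^ 12 - 6 * θ₃ ^ 5 / r ^ 6| := by
      rw [hg]; nlinarith [habs, hε0, hxpos]
    have hdx : d / r ^ 6 = d * x := by rw [hxdef]; field_simp
    show -(min M (d / r ^ 6)) ≤ _
    rw [hdx]
    rcases min_cases M (d * x) with ⟨heq, _⟩ | ⟨heq, _⟩ <;> rw [heq]
    · refine le_trans ?_ key
      have h4 : (0:ℝ) < 4 * c := by linarith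
      have hb : d * x - c * x ^ 2 ≤ d ^ 2 / (4 * c) := by
        rw [le_div_iff₀ h4]
        nlinarith [sq_nonneg (2 * c * x - d)]
      rw [hM]
      linarith
    · refine le_trans ?_ key
      nlinarith [sq_nonneg x, hcpos, hxpos]
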